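/- Let L be a Lie ring and x ∈ L such that ad_x restricts to a bijection of the derived ideal L' onto itself. Then the Engel subring of x equals the centralizer of x: E_L(x) = C_L(x). -/
import Mathlib


/-- Let `L` be a Lie ring and `x ∈ L` such that `ad_x` restricts to a
bijection of the derived ideal `L'` onto itself.  Then the Engel subring of `x` equals the
centralizer of `x`: `E_L(x) = C_L(x)`. -/
theorem stmt_13 {L : Type*} [LieRing L] (x : L)
    (hmaps : ∀ z ∈ LieAlgebra.derivedSeries ℤ L 1, ⁅x, z⁆ ∈ LieAlgebra.derivedSeries ℤ L 1)
    (hinj : ∀ z ∈ LieAlgebra.derivedSeries ℤ L 1, ∀ w ∈ LieAlgebra.derivedSeries ℤ L 1,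
      ⁅x, z⁆ = ⁅x, w⁆ → z = w)
    (hsurj : ∀ w ∈ LieAlgebra.derivedSeries ℤ L 1,
      ∃ z ∈ LieAlgebra.derivedSeries ℤ L 1, ⁅x, z⁆ = w) :
    {y : L | ∃ n : ℕ, (fun z : L => ⁅x, z⁆)^[n] y = 0} = {y : L | ⁅x, y⁆ = 0} := by
  have key : ∀ n : ℕ, ∀ z ∈ LieAlgebra.derivedSeries ℤ L 1,
      (fun z : L => ⁅x, z⁆)^[n] z = 0 → z = 0 := by
    intro n
    induction n with
    | zero => intro z _ h; simpa using h
    | succ m ih =>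
      intro z hz h
      rw [Function.iterate_succ, Function.comp_apply] at h
      have hz0 : ⁅x, z⁆ = 0 := ih _ (hmaps z hz) h
      exact hinj z hz 0 (LieAlgebra.derivedSeries ℤ L 1).zero_mem (by simpa using hz0)
  ext y
  simp only [Set.mem_setOf_eq]
  constructor
  · rintro ⟨n, hn⟩
    cases n with
    | zero => simp only [Function.iterate_zero, id_eq] at hn; simp [hn]
    | succ m =>
      rw [Function.iterate_succ, Function.comp_apply] at hn
      have hxy : ⁅x, y⁆ ∈ LieAlgebra.derivedSeries ℤ L 1 := by
        rw [LieAlgebra.derivedSeries_def, LieAlgebra.derivedSeriesOfIdeal_succ,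
          LieAlgebra.derivedSeriesOfIdeal_zero]
        exact LieSubmodule.lie_mem_lie (LieSubmodule.mem_top x) (LieSubmodule.mem_top y)
      exact key m _ hxy hn
  · intro h; exact ⟨1, by simpa using h⟩
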